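/- arXiv:1104.0280 — 2 statements merged into one kernel-verified Lean document; each statement's English description precedes it below -/
import Mathlib

section
/- For all integers a₁, a₂, a₃, b₁, b₂, b₃, setting α = a₁H₁+a₂H₂+a₃H₃ and β = b₁H₁+b₂H₂+b₃H₃, the coefficient of H₁²H₂²H₃ in (homogeneous degree-4 component of [X]·σ)·(α+β) equals 36(a₁+b₁+a₂+b₂) + 24(a₃+b₃). (This is the Chern invariant ∫_X c₂(T_X)c₁(E) for the rank-2 bundle E = O(a₁,a₂,a₃)|_X ⊕ O(b₁,b₂,b₃)|_X, whose first Chern class is α+β.) -/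
open MvPolynomial Finset

noncomputable section

/-- The three hyperplane classes `H₁, H₂, H₃` of `ℙ²×ℙ²×ℙ¹`,
as variables of the polynomial ring `ℤ[H₁,H₂,H₃]`. -/
def H1 : MvPolynomial (Fin 3) ℤ := X 0
def H2 : MvPolynomial (Fin 3) ℤ := X 1
def H3 : MvPolynomial (Fin 3) ℤ := X 2

/-- `∫p` : the coefficient of `H₁²H₂²H₃` in `p`, i.e. the degree map of
`ℙ²×ℙ²×ℙ¹` normalized by `H₁·H₁·H₂·H₂·H₃ = 1`. -/
def intX (p : MvPolynomial (Fin 3) ℤ) : ℤ :=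
  coeff (Finsupp.single 0 2 + Finsupp.single 1 2 + Finsupp.single 2 1) p

/-- `[X] = (2H₁+2H₂)(H₁+H₂+2H₃)`, the class of the complete-intersection
Calabi-Yau 3-fold `X ⊂ ℙ²×ℙ²×ℙ¹` cut out by a section of `O(2,2,0) ⊕ O(1,1,2)`. -/
def Xcls : MvPolynomial (Fin 3) ℤ := (2 * H1 + 2 * H2) * (H1 + H2 + 2 * H3)

/-- The pushforward of `c₁(O(d₁,d₂,d₃)|_X)`, i.e. the linear form `d₁H₁+d₂H₂+d₃H₃`. -/
def L (d₁ d₂ d₃ : ℤ) : MvPolynomial (Fin 3) ℤ := C d₁ * H1 + C d₂ * H2 + C d₃ * H3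

/-- `σ = (1+H₁)³(1+H₂)³(1+H₃)² · (Σ_{k<6} (−(2H₁+2H₂))^k) · (Σ_{k<6} (−(H₁+H₂+2H₃))^k)`,
the truncated total Chern class of `T_X` divided by `[X]` (adjunction formula with
truncated geometric series for the inverses). -/
def sigmaX : MvPolynomial (Fin 3) ℤ :=
  (1 + H1) ^ 3 * (1 + H2) ^ 3 * (1 + H3) ^ 2 *
    (∑ k ∈ Finset.range 6, (-(2 * H1 + 2 * H2)) ^ k) *
    (∑ k ∈ Finset.range 6, (-(H1 + H2 + 2 * H3)) ^ k)

/-- Congruence modulo the ideal `(H₁³, H₂³, H₃²)`. -/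
def CRel (p q : MvPolynomial (Fin 3) ℤ) : Prop :=
  ∃ a b c : MvPolynomial (Fin 3) ℤ, p = q + X 0 ^ 3 * a + X 1 ^ 3 * b + X 2 ^ 2 * c

lemma CRel.refl (p : MvPolynomial (Fin 3) ℤ) : CRel p p := ⟨0, 0, 0, by ring⟩

lemma CRel.trans' {p q r : MvPolynomial (Fin 3) ℤ} (h1 : CRel p q) (h2 : CRel q r) : CRel p r := by
  obtain ⟨a, b, c, rfl⟩ := h1
  obtain ⟨a', b', c', rfl⟩ := h2
  exact ⟨a + a', b + b', c + c', by ring⟩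

lemma CRel.mul {p p' q q' : MvPolynomial (Fin 3) ℤ} (h1 : CRel p p') (h2 : CRel q q') :
    CRel (p * q) (p' * q') := by
  obtain ⟨a, b, c, rfl⟩ := h1
  obtain ⟨a', b', c', rfl⟩ := h2
  exact ⟨p' * a' + a * (q' + X 0 ^ 3 * a' + X 1 ^ 3 * b' + X 2 ^ 2 * c'),
         p' * b' + b * (q' + X 0 ^ 3 * a' + X 1 ^ 3 * b' + X 2 ^ 2 * c'),
         p' * c' + c * (q' + X 0 ^ 3 * a' + X 1 ^ 3 * b' + X 2 ^ 2 * c'), by ring⟩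

lemma coeff_X_pow_mul_eq_zero {m : Fin 3 →₀ ℕ} {i : Fin 3} {k : ℕ} (h : m i < k)
    (p : MvPolynomial (Fin 3) ℤ) : coeff m (X i ^ k * p) = 0 := by
  rw [coeff_mul]
  apply Finset.sum_eq_zero
  rintro ⟨d, e⟩ hde
  rw [Finset.HasAntidiagonal.mem_antidiagonal] at hde
  rw [coeff_X_pow]
  split_ifs with hd
  · exfalso
    have h2 := DFunLike.congr_fun hde i
    rw [← hd] at h2
    simp only [Finsupp.add_apply, Finsupp.single_eq_same] at h2
    omega
  · exact zero_mul _

lemma CRel.coeff_eq {p q : MvPolynomial (Fin 3) ℤ} (h : CRel p q) {m : Fin 3 →₀ ℕ}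
    (h0 : m 0 < 3) (h1 : m 1 < 3) (h2 : m 2 < 2) : coeff m p = coeff m q := by
  obtain ⟨a, b, c, rfl⟩ := h
  simp [coeff_add, coeff_X_pow_mul_eq_zero, h0, h1, h2]

lemma coeff_term (r : ℤ) (a b c : ℕ) (m : Fin 3 →₀ ℕ) :
    coeff m (C r * (X 0 ^ a * X 1 ^ b * X 2 ^ c) : MvPolynomial (Fin 3) ℤ) =
      if Finsupp.single 0 a + Finsupp.single 1 b + Finsupp.single 2 c = m then r else 0 := by
  rw [X_pow_eq_monomial, X_pow_eq_monomial, X_pow_eq_monomial, monomial_mul, monomial_mul,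
    C_mul_monomial, coeff_monomial]
  simp

lemma triple_eq_iff (a b c a' b' c' : ℕ) :
    (Finsupp.single (0 : Fin 3) a + Finsupp.single 1 b + Finsupp.single 2 c =
      Finsupp.single 0 a' + Finsupp.single 1 b' + Finsupp.single 2 c') ↔
    (a = a' ∧ b = b' ∧ c = c') := by
  constructor
  · intro h
    have e0 := DFunLike.congr_fun h 0
    have e1 := DFunLike.congr_fun h 1
    have e2 := DFunLike.congr_fun h 2
    simp [Finsupp.single_apply] at e0 e1 e2
    exact ⟨e0, e1, e2⟩
  · rintro ⟨rfl, rfl, rfl⟩; rfl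

lemma triple_apply (a b c : ℕ) (i : Fin 3) :
    ((Finsupp.single (0 : Fin 3) a + Finsupp.single 1 b + Finsupp.single 2 c : Fin 3 →₀ ℕ)) i =
      if i = 0 then a else if i = 1 then b else c := by
  fin_cases i <;> simp [Finsupp.single_apply]

lemma triple_degree (a b c : ℕ) :
    Finsupp.degree (Finsupp.single (0 : Fin 3) a + Finsupp.single 1 b + Finsupp.single 2 c) =
      a + b + c := by
  classical
  rw [Finsupp.degree_eq_weight_one]
  simp [map_add, Finsupp.weight_apply, Finsupp.sum_single_index]


set_option maxHeartbeats 1600000 in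
lemma h1 : CRel ((1 + H1) ^ 3 * (1 + H2) ^ 3) (((1) : MvPolynomial (Fin 3) ℤ) + ((3) : MvPolynomial (Fin 3) ℤ) * X 1 + ((3) : MvPolynomial (Fin 3) ℤ) * X 1 ^ 2 + ((3) : MvPolynomial (Fin 3) ℤ) * X 0 + ((9) : MvPolynomial (Fin 3) ℤ) * X 0 * X 1 + ((9) : MvPolynomial (Fin 3) ℤ) * X 0 * X 1 ^ 2 + ((3) : MvPolynomial (Fin 3) ℤ) * X 0 ^ 2 + ((9) : MvPolynomial (Fin 3) ℤ) * X 0 ^ 2 * X 1 + ((9) : MvPolynomial (Fin 3) ℤ) * X 0 ^ 2 * X 1 ^ 2) :=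
  ⟨((1) : MvPolynomial (Fin 3) ℤ) + ((3) : MvPolynomial (Fin 3) ℤ) * X 1 + ((3) : MvPolynomial (Fin 3) ℤ) * X 1 ^ 2 + ((1) : MvPolynomial (Fin 3) ℤ) * X 1 ^ 3, ((1) : MvPolynomial (Fin 3) ℤ) + ((3) : MvPolynomial (Fin 3) ℤ) * X 0 + ((3) : MvPolynomial (Fin 3) ℤ) * X 0 ^ 2, (0 : MvPolynomial (Fin 3) ℤ), by simp only [H1, H2, H3]; ring⟩

set_option maxHeartbeats 1600000 in
lemma h2 : CRel ((1 + H1) ^ 3 * (1 + H2) ^ 3 * (1 + H3) ^ 2) (((1) : MvPolynomial (Fin 3) ℤ) + ((2) : MvPolynomial (Fin 3) ℤ) * X 2 + ((3) : MvPolynomial (Fin 3) ℤ) * X 1 + ((6) : MvPolynomial (Fin 3) ℤ) * X 1 * X 2 + ((3) : MvPolynomial (Fin 3) ℤ) * X 1 ^ 2 + ((6) : MvPolynomial (Fin 3) ℤ) * X 1 ^ 2 * X 2 + ((3) : MvPolynomial (Fin 3) ℤ) * X 0 + ((6) : MvPolynomial (Fin 3) ℤ) * X 0 * X 2 + ((9)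 : MvPolynomial (Fin 3) ℤ) * X 0 * X 1 + ((18) : MvPolynomial (Fin 3) ℤ) * X 0 * X 1 * X 2 + ((9) : MvPolynomial (Fin 3) ℤ) * X 0 * X 1 ^ 2 + ((18) : MvPolynomial (Fin 3) ℤ) * X 0 * X 1 ^ 2 * X 2 + ((3) : MvPolynomial (Fin 3) ℤ) * X 0 ^ 2 + ((6) : MvPolynomial (Fin 3) ℤ) * X 0 ^ 2 * X 2 + ((9) : MvPolynomial (Fin 3) ℤ) * X 0 ^ 2 * X 1 + ((18) : MvPolynomial (Fin 3) ℤ) * X 0 ^ 2 * X 1 * X 2 + ((9) : MvPolynomial (Fin 3) ℤ) * X 0 ^ 2 * X 1 ^ 2 + ((18) : MvPolynomial (Fin 3) ℤ) * X 0 ^ 2 * X 1 ^ 2 * X 2) :=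
  (h1.mul (CRel.refl ((1 + H3) ^ 2))).trans'
  ⟨(0 : MvPolynomial (Fin 3) ℤ), (0 : MvPolynomial (Fin 3) ℤ), ((1) : MvPolynomial (Fin 3) ℤ) + ((3) : MvPolynomial (Fin 3) ℤ) * X 1 + ((3) : MvPolynomial (Fin 3) ℤ) * X 1 ^ 2 + ((3) : MvPolynomial (Fin 3) ℤ) * X 0 + ((9) : MvPolynomial (Fin 3) ℤ) * X 0 * X 1 + ((9) : MvPolynomial (Fin 3) ℤ) * X 0 * X 1 ^ 2 + ((3) : MvPolynomial (Fin 3) ℤ) * X 0 ^ 2 + ((9) : MvPolynomial (Fin 3) ℤ) * X 0 ^ 2 * X 1 + ((9) : MvPolynomial (Fin 3) ℤ) * X 0 ^ 2 * X 1 ^ 2, by simp only [H1, H2, H3]; ring⟩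

set_option maxHeartbeats 1600000 in
lemma h3 : CRel (∑ k ∈ Finset.range 6, (-(2 * H1 + 2 * H2)) ^ k) (((1) : MvPolynomial (Fin 3) ℤ) + ((-2) : MvPolynomial (Fin 3) ℤ) * X 1 + ((4) : MvPolynomial (Fin 3) ℤ) * X 1 ^ 2 + ((-2) : MvPolynomial (Fin 3) ℤ) * X 0 + ((8) : MvPolynomial (Fin 3) ℤ) * X 0 * X 1 + ((-24) : MvPolynomial (Fin 3) ℤ) * X 0 * X 1 ^ 2 + ((4) : MvPolynomial (Fin 3) ℤ) * X 0 ^ 2 + ((-24) : MvPolynomial (Fin 3) ℤ) * X 0 ^ 2 * X 1 + ((96) : MvPolynomial (Fin 3) ℤ) * X 0 ^ 2 * X 1 ^ 2) :=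
  ⟨((-8) : MvPolynomial (Fin 3) ℤ) + ((64) : MvPolynomial (Fin 3) ℤ) * X 1 + ((-320) : MvPolynomial (Fin 3) ℤ) * X 1 ^ 2 + ((16) : MvPolynomial (Fin 3) ℤ) * X 0 + ((-160) : MvPolynomial (Fin 3) ℤ) * X 0 * X 1 + ((-32) : MvPolynomial (Fin 3) ℤ) * X 0 ^ 2, ((-8) : MvPolynomial (Fin 3) ℤ) + ((16) : MvPolynomial (Fin 3) ℤ) * X 1 + ((-32) : MvPolynomial (Fin 3) ℤ) * X 1 ^ 2 + ((64) : MvPolynomial (Fin 3) ℤ) * X 0 + ((-160) : MvPolynomial (Fin 3) ℤ) * X 0 * X 1 + ((-320) : MvPolynomial (Fin 3) ℤ) * X 0 ^ 2, (0 : MvPolynomial (Fin 3) ℤ), by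
    simp only [H1, H2, H3, Finset.sum_range_succ, Finset.sum_range_zero]; ring⟩

set_option maxHeartbeats 1600000 in
lemma h4 : CRel ((1 + H1) ^ 3 * (1 + H2) ^ 3 * (1 + H3) ^ 2 *
    (∑ k ∈ Finset.range 6, (-(2 * H1 + 2 * H2)) ^ k)) (((1) : MvPolynomial (Fin 3) ℤ) + ((2) : MvPolynomial (Fin 3) ℤ) * X 2 + ((1) : MvPolynomial (Fin 3) ℤ) * X 1 + ((2) : MvPolynomial (Fin 3) ℤ) * X 1 * X 2 + ((1) : MvPolynomial (Fin 3) ℤ) * X 1 ^ 2 + ((2) : MvPolynomial (Fin 3) ℤ) * X 1 ^ 2 * X 2 + ((1) : MvPolynomial (Fin 3) ℤ) * X 0 + ((2) : MvPolynomial (Fin 3) ℤ) * X 0 * X 2 + ((5) : MvPolynomial (Fin 3) ℤ) * X 0 * X 1 + ((10) : MvPolynomial (Fin 3) ℤ) * X 0 * X 1 * X 2 + ((-3) : MvPolynomial (Fin 3) ℤ) * X 0 * X 1 ^ 2 + ((-6) : MvPolynomial (Fin 3) ℤ) * X 0 * X 1 ^ 2 * X 2 + ((1) : MvPolynomial (Fin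 3) ℤ) * X 0 ^ 2 + ((2) : MvPolynomial (Fin 3) ℤ) * X 0 ^ 2 * X 2 + ((-3) : MvPolynomial (Fin 3) ℤ) * X 0 ^ 2 * X 1 + ((-6) : MvPolynomial (Fin 3) ℤ) * X 0 ^ 2 * X 1 * X 2 + ((21) : MvPolynomial (Fin 3) ℤ) * X 0 ^ 2 * X 1 ^ 2 + ((42) : MvPolynomial (Fin 3) ℤ) * X 0 ^ 2 * X 1 ^ 2 * X 2) :=
  (h2.mul h3).trans'
  ⟨((6) : MvPolynomial (Fin 3) ℤ) + ((12) : MvPolynomial (Fin 3) ℤ) * X 2 + ((-30) : MvPolynomial (Fin 3) ℤ) * X 1 + ((-60) : MvPolynomial (Fin 3) ℤ) * X 1 * X 2 + ((90) : MvPolynomial (Fin 3) ℤ) * X 1 ^ 2 + ((180) : MvPolynomial (Fin 3) ℤ) * X 1 ^ 2 * X 2 + ((504) : MvPolynomial (Fin 3) ℤ) * X 1 ^ 3 + ((1008) : MvPolynomial (Fin 3) ℤ) * X 1 ^ 3 * X 2 + ((648) : MvPolynomial (Fin 3) ℤ) * X 1 ^ 4 + ((1296) : MvPolynomial (Fin 3)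 ℤ) * X 1 ^ 4 * X 2 + ((12) : MvPolynomial (Fin 3) ℤ) * X 0 + ((24) : MvPolynomial (Fin 3) ℤ) * X 0 * X 2 + ((-36) : MvPolynomial (Fin 3) ℤ) * X 0 * X 1 + ((-72) : MvPolynomial (Fin 3) ℤ) * X 0 * X 1 * X 2 + ((108) : MvPolynomial (Fin 3) ℤ) * X 0 * X 1 ^ 2 + ((216) : MvPolynomial (Fin 3) ℤ) * X 0 * X 1 ^ 2 * X 2 + ((648) : MvPolynomial (Fin 3) ℤ) * X 0 * X 1 ^ 3 + ((1296) : MvPolynomial (Fin 3) ℤ) * X 0 * X 1 ^ 3 * X 2 + ((864) : MvPolynomial (Fin 3) ℤ) * X 0 * X 1 ^ 4 + ((1728) : MvPolynomial (Fin 3) ℤ) * X 0 * X 1 ^ 4 * X 2, ((6) : MvPolynomial (Fin 3) ℤ) + ((12) : MvPolynomial (Fin 3) ℤ) * X 2 + ((12) : MvPolynomial (Fin 3) ℤ) * X 1 + ((24) : MvPolynomial (Fin 3) ℤ) * X 1 * X 2 + ((-30) : MvPolynomial (Fin 3) ℤ) * X 0 + ((-60) : MvPolynomial (Fin 3) ℤ)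 * X 0 * X 2 + ((-36) : MvPolynomial (Fin 3) ℤ) * X 0 * X 1 + ((-72) : MvPolynomial (Fin 3) ℤ) * X 0 * X 1 * X 2 + ((90) : MvPolynomial (Fin 3) ℤ) * X 0 ^ 2 + ((180) : MvPolynomial (Fin 3) ℤ) * X 0 ^ 2 * X 2 + ((108) : MvPolynomial (Fin 3) ℤ) * X 0 ^ 2 * X 1 + ((216) : MvPolynomial (Fin 3) ℤ) * X 0 ^ 2 * X 1 * X 2, (0 : MvPolynomial (Fin 3) ℤ), by ring⟩

set_option maxHeartbeats 1600000 in
lemma h5 : CRel (∑ k ∈ Finset.range 6, (-(H1 + H2 + 2 * H3)) ^ k) (((1) : MvPolynomial (Fin 3) ℤ) + ((-2) : MvPolynomial (Fin 3) ℤ) * X 2 + ((-1) : MvPolynomial (Fin 3) ℤ) * X 1 + ((4) : MvPolynomial (Fin 3) ℤ) * X 1 * X 2 + ((1) : MvPolynomial (Fin 3) ℤ) * X 1 ^ 2 + ((-6) : MvPolynomial (Fin 3) ℤ) * X 1 ^ 2 * X 2 + ((-1) : MvPolynomial (Fin 3) ℤ) * X 0 + ((4) : MvPolynomial (Fin 3)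 ℤ) * X 0 * X 2 + ((2) : MvPolynomial (Fin 3) ℤ) * X 0 * X 1 + ((-12) : MvPolynomial (Fin 3) ℤ) * X 0 * X 1 * X 2 + ((-3) : MvPolynomial (Fin 3) ℤ) * X 0 * X 1 ^ 2 + ((24) : MvPolynomial (Fin 3) ℤ) * X 0 * X 1 ^ 2 * X 2 + ((1) : MvPolynomial (Fin 3) ℤ) * X 0 ^ 2 + ((-6) : MvPolynomial (Fin 3) ℤ) * X 0 ^ 2 * X 2 + ((-3) : MvPolynomial (Fin 3) ℤ) * X 0 ^ 2 * X 1 + ((24) : MvPolynomial (Fin 3) ℤ) * X 0 ^ 2 * X 1 * X 2 + ((6) : MvPolynomial (Fin 3) ℤ) * X 0 ^ 2 * X 1 ^ 2 + ((-60) : MvPolynomial (Fin 3) ℤ) * X 0 ^ 2 * X 1 ^ 2 * X 2) :=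
  ⟨((-1) : MvPolynomial (Fin 3) ℤ) + ((8) : MvPolynomial (Fin 3) ℤ) * X 2 + ((-40) : MvPolynomial (Fin 3) ℤ) * X 2 ^ 2 + ((4) : MvPolynomial (Fin 3) ℤ) * X 1 + ((-40) : MvPolynomial (Fin 3) ℤ) * X 1 * X 2 + ((-10) : MvPolynomial (Fin 3) ℤ) * X 1 ^ 2 + ((1) : MvPolynomial (Fin 3) ℤ) * X 0 + ((-10) : MvPolynomial (Fin 3) ℤ) * X 0 * X 2 + ((-5) : MvPolynomial (Fin 3) ℤ) * X 0 * X 1 + ((-1) : MvPolynomial (Fin 3) ℤ) * X 0 ^ 2, ((-1) : MvPolynomial (Fin 3) ℤ) + ((8) : MvPolynomial (Fin 3) ℤ) * X 2 + ((-40) : MvPolynomial (Fin 3) ℤ) * X 2 ^ 2 + ((1) : MvPolynomial (Fin 3) ℤ) * X 1 + ((-10) : MvPolynomial (Fin 3) ℤ) * X 1 * X 2 + ((-1) : MvPolynomial (Fin 3) ℤ) * X 1 ^ 2 + ((4) : MvPolynomial (Fin 3) ℤ) * X 0 + ((-40) : MvPolynomial (Fin 3) ℤ) * X 0 * X 2 +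 ((-5) : MvPolynomial (Fin 3) ℤ) * X 0 * X 1 + ((-10) : MvPolynomial (Fin 3) ℤ) * X 0 ^ 2, ((4) : MvPolynomial (Fin 3) ℤ) + ((-8) : MvPolynomial (Fin 3) ℤ) * X 2 + ((16) : MvPolynomial (Fin 3) ℤ) * X 2 ^ 2 + ((-32) : MvPolynomial (Fin 3) ℤ) * X 2 ^ 3 + ((-12) : MvPolynomial (Fin 3) ℤ) * X 1 + ((32) : MvPolynomial (Fin 3) ℤ) * X 1 * X 2 + ((-80) : MvPolynomial (Fin 3) ℤ) * X 1 * X 2 ^ 2 + ((24) : MvPolynomial (Fin 3) ℤ) * X 1 ^ 2 + ((-80) : MvPolynomial (Fin 3) ℤ) * X 1 ^ 2 * X 2 + ((-12) : MvPolynomial (Fin 3) ℤ) * X 0 + ((32) : MvPolynomial (Fin 3) ℤ) * X 0 * X 2 + ((-80) : MvPolynomial (Fin 3) ℤ) * X 0 * X 2 ^ 2 + ((48) : MvPolynomial (Fin 3) ℤ) * X 0 * X 1 + ((-160) : MvPolynomial (Fin 3) ℤ) * X 0 * X 1 * X 2 + ((-120) : MvPolynomial (Fin 3) ℤ) * X 0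 * X 1 ^ 2 + ((24) : MvPolynomial (Fin 3) ℤ) * X 0 ^ 2 + ((-80) : MvPolynomial (Fin 3) ℤ) * X 0 ^ 2 * X 2 + ((-120) : MvPolynomial (Fin 3) ℤ) * X 0 ^ 2 * X 1, by
    simp only [H1, H2, H3, Finset.sum_range_succ, Finset.sum_range_zero]; ring⟩

set_option maxHeartbeats 1600000 in
lemma h6 : CRel sigmaX (((1) : MvPolynomial (Fin 3) ℤ) + ((2) : MvPolynomial (Fin 3) ℤ) * X 1 * X 2 + ((1) : MvPolynomial (Fin 3) ℤ) * X 1 ^ 2 + ((-2) : MvPolynomial (Fin 3) ℤ) * X 1 ^ 2 * X 2 + ((2) : MvPolynomial (Fin 3) ℤ) * X 0 * X 2 + ((5) : MvPolynomial (Fin 3) ℤ) * X 0 * X 1 + ((-4) : MvPolynomial (Fin 3) ℤ) * X 0 * X 1 * X 2 + ((-9) : MvPolynomial (Fin 3) ℤ) * X 0 * X 1 ^ 2 + ((18) : MvPolynomial (Fin 3) ℤ) * X 0 * X 1 ^ 2 * X 2 + ((1) : MvPolynomial (Fin 3) ℤ) * X 0 ^ 2 + ((-2) : MvPolynomial (Fin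 3) ℤ) * X 0 ^ 2 * X 2 + ((-9) : MvPolynomial (Fin 3) ℤ) * X 0 ^ 2 * X 1 + ((18) : MvPolynomial (Fin 3) ℤ) * X 0 ^ 2 * X 1 * X 2 + ((39) : MvPolynomial (Fin 3) ℤ) * X 0 ^ 2 * X 1 ^ 2 + ((-72) : MvPolynomial (Fin 3) ℤ) * X 0 ^ 2 * X 1 ^ 2 * X 2) :=
  (h4.mul h5).trans'
  ⟨((-2) : MvPolynomial (Fin 3) ℤ) * X 2 + ((-4) : MvPolynomial (Fin 3) ℤ) * X 2 ^ 2 + ((7) : MvPolynomial (Fin 3) ℤ) * X 1 + ((-16) : MvPolynomial (Fin 3) ℤ) * X 1 * X 2 + ((-60) : MvPolynomial (Fin 3) ℤ) * X 1 * X 2 ^ 2 + ((-42) : MvPolynomial (Fin 3) ℤ) * X 1 ^ 2 + ((138) : MvPolynomial (Fin 3) ℤ) * X 1 ^ 2 * X 2 + ((444) : MvPolynomial (Fin 3) ℤ) * X 1 ^ 2 * X 2 ^ 2 + ((90) : MvPolynomial (Fin 3) ℤ) * X 1 ^ 3 + ((-516) : MvPolynomial (Fin 3) ℤ) * X 1 ^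 3 * X 2 + ((-1392) : MvPolynomial (Fin 3) ℤ) * X 1 ^ 3 * X 2 ^ 2 + ((-81) : MvPolynomial (Fin 3) ℤ) * X 1 ^ 4 + ((522) : MvPolynomial (Fin 3) ℤ) * X 1 ^ 4 * X 2 + ((1368) : MvPolynomial (Fin 3) ℤ) * X 1 ^ 4 * X 2 ^ 2 + ((1) : MvPolynomial (Fin 3) ℤ) * X 0 + ((-4) : MvPolynomial (Fin 3) ℤ) * X 0 * X 2 + ((-12) : MvPolynomial (Fin 3) ℤ) * X 0 * X 2 ^ 2 + ((-6) : MvPolynomial (Fin 3) ℤ) * X 0 * X 1 + ((30) : MvPolynomial (Fin 3) ℤ) * X 0 * X 1 * X 2 + ((84) : MvPolynomial (Fin 3) ℤ) * X 0 * X 1 * X 2 ^ 2 + ((36) : MvPolynomial (Fin 3) ℤ) * X 0 * X 1 ^ 2 + ((-186) : MvPolynomial (Fin 3) ℤ) * X 0 * X 1 ^ 2 * X 2 + ((-516) : MvPolynomial (Fin 3) ℤ) * X 0 * X 1 ^ 2 * X 2 ^ 2 + ((-81) : MvPolynomial (Fin 3) ℤ) * X 0 * X 1 ^ 3 + ((522)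 : MvPolynomial (Fin 3) ℤ) * X 0 * X 1 ^ 3 * X 2 + ((1368) : MvPolynomial (Fin 3) ℤ) * X 0 * X 1 ^ 3 * X 2 ^ 2 + ((126) : MvPolynomial (Fin 3) ℤ) * X 0 * X 1 ^ 4 + ((-1008) : MvPolynomial (Fin 3) ℤ) * X 0 * X 1 ^ 4 * X 2 + ((-2520) : MvPolynomial (Fin 3) ℤ) * X 0 * X 1 ^ 4 * X 2 ^ 2, ((-2) : MvPolynomial (Fin 3) ℤ) * X 2 + ((-4) : MvPolynomial (Fin 3) ℤ) * X 2 ^ 2 + ((1) : MvPolynomial (Fin 3) ℤ) * X 1 + ((-4) : MvPolynomial (Fin 3) ℤ) * X 1 * X 2 + ((-12) : MvPolynomial (Fin 3) ℤ) * X 1 * X 2 ^ 2 + ((7) : MvPolynomial (Fin 3) ℤ) * X 0 + ((-16) : MvPolynomial (Fin 3) ℤ) * X 0 * X 2 + ((-60) : MvPolynomial (Fin 3) ℤ) * X 0 * X 2 ^ 2 + ((-6) : MvPolynomial (Fin 3) ℤ) * X 0 * X 1 + ((30) : MvPolynomial (Fin 3) ℤ) * X 0 * X 1 * X 2 + ((84)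 : MvPolynomial (Fin 3) ℤ) * X 0 * X 1 * X 2 ^ 2 + ((-42) : MvPolynomial (Fin 3) ℤ) * X 0 ^ 2 + ((138) : MvPolynomial (Fin 3) ℤ) * X 0 ^ 2 * X 2 + ((444) : MvPolynomial (Fin 3) ℤ) * X 0 ^ 2 * X 2 ^ 2 + ((36) : MvPolynomial (Fin 3) ℤ) * X 0 ^ 2 * X 1 + ((-186) : MvPolynomial (Fin 3) ℤ) * X 0 ^ 2 * X 1 * X 2 + ((-516) : MvPolynomial (Fin 3) ℤ) * X 0 ^ 2 * X 1 * X 2 ^ 2, ((-4) : MvPolynomial (Fin 3) ℤ) + ((4) : MvPolynomial (Fin 3) ℤ) * X 1 + ((-8) : MvPolynomial (Fin 3) ℤ) * X 1 ^ 2 + ((4) : MvPolynomial (Fin 3) ℤ) * X 0 + ((-28) : MvPolynomial (Fin 3) ℤ) * X 0 * X 1 + ((72) : MvPolynomial (Fin 3) ℤ) * X 0 * X 1 ^ 2 + ((-8) : MvPolynomial (Fin 3) ℤ) * X 0 ^ 2 + ((72) : MvPolynomial (Fin 3) ℤ) * X 0 ^ 2 * X 1 + ((-300) : MvPolynomial (Fin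 3) ℤ) * X 0 ^ 2 * X 1 ^ 2, by ring⟩

def Epoly : MvPolynomial (Fin 3) ℤ :=
  C (4 : ℤ) * (X 0 ^ 0 * X 1 ^ 1 * X 2 ^ 1) + C (2 : ℤ) * (X 0 ^ 0 * X 1 ^ 2 * X 2 ^ 0) + C (4 : ℤ) * (X 0 ^ 1 * X 1 ^ 0 * X 2 ^ 1) + C (4 : ℤ) * (X 0 ^ 1 * X 1 ^ 1 * X 2 ^ 0) + C (36 : ℤ) * (X 0 ^ 1 * X 1 ^ 2 * X 2 ^ 1) + C (2 : ℤ) * (X 0 ^ 2 * X 1 ^ 0 * X 2 ^ 0) + C (36 : ℤ) * (X 0 ^ 2 * X 1 ^ 1 * X 2 ^ 1) + C (24 : ℤ) * (X 0 ^ 2 * X 1 ^ 2 * X 2 ^ 0) + C (-96 : ℤ) * (X 0 ^ 2 * X 1 ^ 2 * X 2 ^ 1)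

set_option maxHeartbeats 1600000 in
lemma h7 : CRel (Xcls * sigmaX) Epoly :=
  ((CRel.refl Xcls).mul h6).trans'
  ⟨((8) : MvPolynomial (Fin 3) ℤ) * X 2 + ((-8) : MvPolynomial (Fin 3) ℤ) * X 2 ^ 2 + ((14) : MvPolynomial (Fin 3) ℤ) * X 1 + ((-52) : MvPolynomial (Fin 3) ℤ) * X 1 * X 2 + ((72) : MvPolynomial (Fin 3) ℤ) * X 1 * X 2 ^ 2 + ((-54) : MvPolynomial (Fin 3) ℤ) * X 1 ^ 2 + ((264) : MvPolynomial (Fin 3) ℤ) * X 1 ^ 2 * X 2 + ((-288) : MvPolynomial (Fin 3) ℤ) * X 1 ^ 2 * X 2 ^ 2 + ((156) : MvPolynomial (Fin 3) ℤ) * X 1 ^ 3 + ((-288) : MvPolynomial (Fin 3) ℤ) * X 1 ^ 3 * X 2 + ((2) : MvPolynomial (Fin 3) ℤ) * X 0 + ((-4) : MvPolynomial (Fin 3) ℤ) * X 0 * X 2 + ((-18) : MvPolynomial (Fin 3) ℤ) * X 0 * X 1 + ((36) : MvPolynomial (Fin 3) ℤ) * X 0 * X 1 * X 2 + ((78) :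 MvPolynomial (Fin 3) ℤ) * X 0 * X 1 ^ 2 + ((-144) : MvPolynomial (Fin 3) ℤ) * X 0 * X 1 ^ 2 * X 2, ((8) : MvPolynomial (Fin 3) ℤ) * X 2 + ((-8) : MvPolynomial (Fin 3) ℤ) * X 2 ^ 2 + ((2) : MvPolynomial (Fin 3) ℤ) * X 1 + ((-4) : MvPolynomial (Fin 3) ℤ) * X 1 * X 2 + ((14) : MvPolynomial (Fin 3) ℤ) * X 0 + ((-52) : MvPolynomial (Fin 3) ℤ) * X 0 * X 2 + ((72) : MvPolynomial (Fin 3) ℤ) * X 0 * X 2 ^ 2 + ((-18) : MvPolynomial (Fin 3) ℤ) * X 0 * X 1 + ((36) : MvPolynomial (Fin 3) ℤ) * X 0 * X 1 * X 2 + ((-54) : MvPolynomial (Fin 3) ℤ) * X 0 ^ 2 + ((264) : MvPolynomial (Fin 3) ℤ) * X 0 ^ 2 * X 2 + ((-288) : MvPolynomial (Fin 3) ℤ) * X 0 ^ 2 * X 2 ^ 2 + ((78) : MvPolynomial (Fin 3) ℤ) * X 0 ^ 2 * X 1 + ((-144) : MvPolynomial (Fin 3) ℤ) * X 0 ^ 2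 * X 1 * X 2, ((8) : MvPolynomial (Fin 3) ℤ) * X 1 ^ 2 + ((16) : MvPolynomial (Fin 3) ℤ) * X 0 * X 1 + ((-24) : MvPolynomial (Fin 3) ℤ) * X 0 * X 1 ^ 2 + ((8) : MvPolynomial (Fin 3) ℤ) * X 0 ^ 2 + ((-24) : MvPolynomial (Fin 3) ℤ) * X 0 ^ 2 * X 1 + ((144) : MvPolynomial (Fin 3) ℤ) * X 0 ^ 2 * X 1 ^ 2, by
    simp only [Xcls, Epoly, H1, H2, H3, map_neg, map_ofNat, map_one]; ring⟩


set_option maxHeartbeats 1600000 in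
/-- `∫_X c₂(T_X)c₁(E) = 36(a₁+b₁+a₂+b₂) + 24(a₃+b₃)` for the rank-2 bundle
`E = O(a₁,a₂,a₃)|_X ⊕ O(b₁,b₂,b₃)|_X`, whose first Chern class is `α+β`. -/
theorem statement8 (a₁ a₂ a₃ b₁ b₂ b₃ : ℤ) :
    intX (homogeneousComponent 4 (Xcls * sigmaX) * (L a₁ a₂ a₃ + L b₁ b₂ b₃)) =
      36 * (a₁ + b₁ + a₂ + b₂) + 24 * (a₃ + b₃) := by
  have hL : L a₁ a₂ a₃ + L b₁ b₂ b₃ =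
      C (a₁ + b₁) * X 0 + C (a₂ + b₂) * X 1 + C (a₃ + b₃) * X 2 := by
    simp only [L, H1, H2, H3, map_add]; ring
  set q := homogeneousComponent 4 (Xcls * sigmaX) with hqdef
  have expand : q * (L a₁ a₂ a₃ + L b₁ b₂ b₃) =
      C (a₁ + b₁) * (q * X 0) + C (a₂ + b₂) * (q * X 1) + C (a₃ + b₃) * (q * X 2) := by
    rw [hL]; ring
  have ht1 : (Finsupp.single 0 2 + Finsupp.single 1 2 + Finsupp.single 2 1 : Fin 3 →₀ ℕ) =
      (Finsupp.single 0 1 + Finsupp.single 1 2 + Finsupp.single 2 1) + Finsupp.single 0 1 := by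
    ext j; fin_cases j <;> simp [Finsupp.single_apply]
  have ht2 : (Finsupp.single 0 2 + Finsupp.single 1 2 + Finsupp.single 2 1 : Fin 3 →₀ ℕ) =
      (Finsupp.single 0 2 + Finsupp.single 1 1 + Finsupp.single 2 1) + Finsupp.single 1 1 := by
    ext j; fin_cases j <;> simp [Finsupp.single_apply]
  have ht3 : (Finsupp.single 0 2 + Finsupp.single 1 2 + Finsupp.single 2 1 : Fin 3 →₀ ℕ) =
      (Finsupp.single 0 2 + Finsupp.single 1 2 + Finsupp.single 2 0) + Finsupp.single 2 1 := by
    ext j; fin_cases j <;> simp [Finsupp.single_apply]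
  have c1 : coeff (Finsupp.single 0 2 + Finsupp.single 1 2 + Finsupp.single 2 1) (q * X 0)
      = 36 := by
    rw [ht1, coeff_mul_X, hqdef, coeff_homogeneousComponent, if_pos (by rw [triple_degree]),
      h7.coeff_eq (by simp only [triple_apply]; decide) (by simp only [triple_apply]; decide)
        (by simp only [triple_apply]; decide)]
    simp only [Epoly, coeff_add, coeff_term, triple_eq_iff]
    norm_num
  have c2 : coeff (Finsupp.single 0 2 + Finsupp.single 1 2 + Finsupp.single 2 1) (q * X 1)
      = 36 := by
    rw [ht2, coeff_mul_X, hqdef, coeff_homogeneousComponent, if_pos (by rw [triple_degree]),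
      h7.coeff_eq (by simp only [triple_apply]; decide) (by simp only [triple_apply]; decide)
        (by simp only [triple_apply]; decide)]
    simp only [Epoly, coeff_add, coeff_term, triple_eq_iff]
    norm_num
  have c3 : coeff (Finsupp.single 0 2 + Finsupp.single 1 2 + Finsupp.single 2 1) (q * X 2)
      = 24 := by
    rw [ht3, coeff_mul_X, hqdef, coeff_homogeneousComponent, if_pos (by rw [triple_degree]),
      h7.coeff_eq (by simp only [triple_apply]; decide) (by simp only [triple_apply]; decide)
        (by simp only [triple_apply]; decide)]
    simp only [Epoly, coeff_add, coeff_term, triple_eq_iff]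
    norm_num
  unfold intX
  rw [expand, coeff_add, coeff_add, coeff_C_mul, coeff_C_mul, coeff_C_mul, c1, c2, c3]
  ring

end
end

section
/- For all integers d₁, d₂, d₃, e₁, e₂, e₃, setting α₁ = d₁H₁+d₂H₂+d₃H₃, α₂ = d₂H₁+d₁H₂+d₃H₃ and β = e₁H₁+e₂H₂+e₃H₃, the coefficient of H₁²H₂²H₃ in [X]·((α₁+β)³ − (α₂+β)³) equals −12(d₁−d₂)(e₁−e₂)(d₁+d₂+e₁+e₂+d₃+e₃). (This is the full simplification of the difference ∫_X c₁(L₁⊗L₃)³ − ∫_X c₁(L₂⊗L₃)³ computed in the paper, where L₁ = O(d₁,d₂,d₃)|_X, L₂ = O(d₂,d₁,d₃)|_X, L₃ = O(e₁,e₂,e₃)|_X.) In particular the difference is nonzero for general choices of the six integers, so tensor product is not compatible with algebraic cobordism of vector bundles. -/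
open MvPolynomial Finset

noncomputable section

lemma mono_C (s : Fin 3 →₀ ℕ) (x y : ℤ) :
    (monomial s x : MvPolynomial (Fin 3) ℤ) * C y = monomial s (x * y) := by
  rw [mul_comm, C_mul_monomial, mul_comm]

set_option maxHeartbeats 2000000 in
lemma key (a b c : ℤ) : intX (Xcls * (L a b c) ^ 3) =
    12*a^2*b + 12*a*b^2 + 6*a^2*c + 24*a*b*c + 6*b^2*c := by
  simp only [intX, Xcls, L, H1, H2, H3]
  ring_nf
  simp only [X, monomial_pow, monomial_mul, one_pow, mul_one, one_mul,
    ← eq_intCast (C : ℤ →+* MvPolynomial (Fin 3) ℤ),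
    ← map_ofNat (C : ℤ →+* MvPolynomial (Fin 3) ℤ), ← map_pow, ← map_mul,
    mono_C, C_mul_monomial]
  simp [coeff_monomial, Finsupp.ext_iff, Fin.forall_fin_succ, Finsupp.add_apply,
    Finsupp.single_apply]

lemma intX_sub (p q : MvPolynomial (Fin 3) ℤ) : intX (p - q) = intX p - intX q := by
  simp [intX]

lemma L_add (x y z u v w : ℤ) : L x y z + L u v w = L (x+u) (y+v) (z+w) := by
  simp only [L, C_add]; ring

/-- Noncompatibility of tensor product with algebraic cobordism:
`∫c₁(L₁⊗L₃)³ − ∫c₁(L₂⊗L₃)³ = −12(d₁−d₂)(e₁−e₂)(d₁+d₂+e₁+e₂+d₃+e₃)` for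
`L₁ = O(d₁,d₂,d₃)|_X`, `L₂ = O(d₂,d₁,d₃)|_X`, `L₃ = O(e₁,e₂,e₃)|_X`; in particular the
difference is nonzero for general choices of the six integers. -/
theorem statement10 (d₁ d₂ d₃ e₁ e₂ e₃ : ℤ) :
    intX (Xcls * ((L d₁ d₂ d₃ + L e₁ e₂ e₃) ^ 3 - (L d₂ d₁ d₃ + L e₁ e₂ e₃) ^ 3)) =
      -12 * (d₁ - d₂) * (e₁ - e₂) * (d₁ + d₂ + e₁ + e₂ + d₃ + e₃) ∧
    ((d₁ - d₂) * (e₁ - e₂) * (d₁ + d₂ + e₁ + e₂ + d₃ + e₃) ≠ 0 →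
      intX (Xcls * (L d₁ d₂ d₃ + L e₁ e₂ e₃) ^ 3) ≠
      intX (Xcls * (L d₂ d₁ d₃ + L e₁ e₂ e₃) ^ 3)) := by
  have hmain : intX (Xcls * ((L d₁ d₂ d₃ + L e₁ e₂ e₃) ^ 3 - (L d₂ d₁ d₃ + L e₁ e₂ e₃) ^ 3)) =
      -12 * (d₁ - d₂) * (e₁ - e₂) * (d₁ + d₂ + e₁ + e₂ + d₃ + e₃) := by
    rw [mul_sub, intX_sub _ _,
      L_add, L_add, key, key]
    ring
  refine ⟨hmain, fun hne heq => hne ?_⟩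
  have h2 : intX (Xcls * ((L d₁ d₂ d₃ + L e₁ e₂ e₃) ^ 3 - (L d₂ d₁ d₃ + L e₁ e₂ e₃) ^ 3)) = 0 := by
    rw [mul_sub, intX_sub _ _, heq, sub_self]
  rw [hmain] at h2
  linarith [h2]

end
end
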